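/- Let α₁ ≥ α₂ ≥ ... ≥ α_n ≥ 0 with Σ_j α_j = 1 and Σ_{j=9}^n α_j ≥ 0.009079. Let z(α) = 2α² log(1/α) if α < α', and z(α) = α/2 if α ≥ α', where α' ∈ (0,1/2) is the unique solution of 2α² log(1/α) = α/2. Then Σ_{j=1}^n z(α_j) ≤ 0.4962357. -/

import Mathlib

set_option maxHeartbeats 4000000


open Finset Real
open scoped Classical

/-- The real value of a coordinate: `true ↦ 1`, `false ↦ -1`, encoding `{-1,1}`. -/
noncomputable def chi (b : Bool) : ℝ := if b then 1 else -1

/-- Expectation with respect to the uniform measure on `{-1,1}^n`. -/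
noncomputable def Ex (n : ℕ) (φ : (Fin n → Bool) → ℝ) : ℝ :=
  (∑ x : Fin n → Bool, φ x) / 2 ^ n

/-- Probability with respect to the uniform measure on `{-1,1}^n`. -/
noncomputable def Pr (n : ℕ) (p : (Fin n → Bool) → Prop) : ℝ :=
  Ex n (fun x => if p x then 1 else 0)

/-- Expectation for two independent uniform vectors on `{-1,1}^n`. -/
noncomputable def Ex2 (n : ℕ) (φ : (Fin n → Bool) → (Fin n → Bool) → ℝ) : ℝ :=
  (∑ x : Fin n → Bool, ∑ y : Fin n → Bool, φ x y) / 2 ^ (2 * n)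

/-- Probability for two independent uniform vectors on `{-1,1}^n`. -/
noncomputable def Pr2 (n : ℕ) (p : (Fin n → Bool) → (Fin n → Bool) → Prop) : ℝ :=
  Ex2 n (fun x y => if p x y then 1 else 0)

/-- Fourier coefficient `ĥ(S) = E[h(X)·∏_{i∈S} X_i]`. -/
noncomputable def coeff (n : ℕ) (h : (Fin n → Bool) → ℝ) (S : Finset (Fin n)) : ℝ :=
  Ex n (fun x => h x * ∏ i ∈ S, chi (x i))

/-- Pointwise negation `x ↦ -x` on `{-1,1}^n`. -/
def neg (n : ℕ) (x : Fin n → Bool) : Fin n → Bool := fun i => !(x i)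

/-! ### Auxiliary machinery for the proof of `stmt14` -/

/-- The deficit function `h(x) = x/2 - 2x² log(1/x) = x/2 + 2x² log x`. -/
noncomputable def hh (x : ℝ) : ℝ := x/2 + 2*x^2*Real.log x

lemma log8_lb : (2.0794415409:ℝ) ≤ Real.log 8 := by
  have h := Real.log_two_gt_d9
  have h8 : Real.log 8 = 3 * Real.log 2 := by
    rw [show (8:ℝ) = 2^3 by norm_num, Real.log_pow]; push_cast; ring
  rw [h8]; linarith

lemma log8_ub : Real.log 8 ≤ 2.0794415424 := by
  have h := Real.log_two_lt_d9
  have h8 : Real.log 8 = 3 * Real.log 2 := by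
    rw [show (8:ℝ) = 2^3 by norm_num, Real.log_pow]; push_cast; ring
  rw [h8]; linarith

lemma log16_ub : Real.log 16 ≤ 2.7725887232 := by
  have h := Real.log_two_lt_d9
  have h16 : Real.log 16 = 4 * Real.log 2 := by
    rw [show (16:ℝ) = 2^4 by norm_num, Real.log_pow]; push_cast; ring
  rw [h16]; linarith

lemma log_ub_pow4 {y x : ℝ} (hy : 0 < y) (h : y ≤ x^4) (hx : 1 ≤ x) :
    Real.log y ≤ 4*(x-1) := by
  have h1 : Real.log y ≤ Real.log (x^4) := Real.log_le_log hy h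
  rw [Real.log_pow] at h1
  have h2 := Real.log_le_sub_one_of_pos (lt_of_lt_of_le one_pos hx)
  push_cast at h1
  linarith

lemma one_sub_inv_le_log {y : ℝ} (hy : 0 < y) : 1 - 1/y ≤ Real.log y := by
  have := Real.one_sub_inv_le_log_of_pos hy
  rw [one_div]; linarith

lemma log_lb_master {σ y p Lp Ly : ℝ} (hσ : 0 < σ) (hy : 0 < y) (hp : 0 < p)
    (hLp : Real.log p ≤ Lp) (hLy : Real.log y ≤ Ly) (h1 : 1 ≤ p*y*σ) :
    -(Lp + Ly) ≤ Real.log σ := by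
  have h0 : 0 ≤ Real.log (p*y*σ) := Real.log_nonneg h1
  rw [Real.log_mul (by positivity) hσ.ne', Real.log_mul hp.ne' hy.ne'] at h0
  linarith

lemma log_lb8 {σ y x Λ : ℝ} (hσ : 0 < σ) (hy : 0 < y) (h1 : 1 ≤ 8*y*σ)
    (hyx : y ≤ x^4) (hx : 1 ≤ x) (hΛ : 2.0794415424 + 4*(x-1) ≤ Λ) :
    -Λ ≤ Real.log σ := by
  have := log_lb_master hσ hy (by norm_num : (0:ℝ) < 8) log8_ub
    (log_ub_pow4 hy hyx hx) h1
  linarith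

lemma log_lb16 {σ y x Λ : ℝ} (hσ : 0 < σ) (hy : 0 < y) (h1 : 1 ≤ 16*y*σ)
    (hyx : y ≤ x^4) (hx : 1 ≤ x) (hΛ : 2.7725887232 + 4*(x-1) ≤ Λ) :
    -Λ ≤ Real.log σ := by
  have := log_lb_master hσ hy (by norm_num : (0:ℝ) < 16) log16_ub
    (log_ub_pow4 hy hyx hx) h1
  linarith

lemma lg_t0 : -(4.7018320:ℝ) ≤ Real.log 0.009079 := by
  have he : (2.7182818283:ℝ) < Real.exp 1 := Real.exp_one_gt_d9
  have hp0 : (0:ℝ) < 2*(Real.exp 1)^4 := by positivity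
  have hp4 : (54.59815:ℝ) ≤ (Real.exp 1)^4 := by
    have h2 : (2.7182818283:ℝ)^4 ≤ (Real.exp 1)^4 :=
      pow_le_pow_left₀ (by norm_num) he.le 4
    nlinarith
  have hLp : Real.log (2*(Real.exp 1)^4) ≤ 4.6931471808 := by
    rw [Real.log_mul (by norm_num) (by positivity), Real.log_pow, Real.log_exp]
    have := Real.log_two_lt_d9
    push_cast; linarith
  have hLy : Real.log (1.0086839:ℝ) ≤ 0.0086839 := by
    have := Real.log_le_sub_one_of_pos (show (0:ℝ) < 1.0086839 by norm_num)
    linarith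
  have h1 : (1:ℝ) ≤ (2*(Real.exp 1)^4)*1.0086839*0.009079 := by nlinarith
  have := log_lb_master (show (0:ℝ) < 0.009079 by norm_num)
    (show (0:ℝ) < 1.0086839 by norm_num) hp0 hLp hLy h1
  linarith

lemma lg002 : -(4.4394415424:ℝ) ≤ Real.log 0.02 :=
  log_lb8 (by norm_num) (show (0:ℝ) < 6.25 by norm_num) (by norm_num)
    (show (6.25:ℝ) ≤ 1.59^4 by norm_num) (by norm_num) (by norm_num)

lemma lg003 : -(3.5797887232:ℝ) ≤ Real.log 0.03 :=
  log_lb16 (by norm_num) (show (0:ℝ) < 25/12 by norm_num) (by norm_num)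
    (show (25/12:ℝ) ≤ 1.2018^4 by norm_num) (by norm_num) (by norm_num)

lemma lg0035 : -(3.3969887232:ℝ) ≤ Real.log 0.035 :=
  log_lb16 (by norm_num) (show (0:ℝ) < 125/70 by norm_num) (by norm_num)
    (show (125/70:ℝ) ≤ 1.1561^4 by norm_num) (by norm_num) (by norm_num)

lemma lg0065 : -(2.7918415424:ℝ) ≤ Real.log 0.065 :=
  log_lb8 (by norm_num) (show (0:ℝ) < 25/13 by norm_num) (by norm_num)
    (show (25/13:ℝ) ≤ 1.1781^4 by norm_num) (by norm_num) (by norm_num)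

lemma lg0085 : -(2.4847215424:ℝ) ≤ Real.log 0.085 :=
  log_lb8 (by norm_num) (show (0:ℝ) < 25/17 by norm_num) (by norm_num)
    (show (25/17:ℝ) ≤ 1.10132^4 by norm_num) (by norm_num) (by norm_num)

lemma lg0095 : -(2.3635615424:ℝ) ≤ Real.log 0.095 :=
  log_lb8 (by norm_num) (show (0:ℝ) < 25/19 by norm_num) (by norm_num)
    (show (25/19:ℝ) ≤ 1.07103^4 by norm_num) (by norm_num) (by norm_num)

lemma lg0098 : -(2.3304415424:ℝ) ≤ Real.log 0.098 :=
  log_lb8 (by norm_num) (show (0:ℝ) < 125/98 by norm_num) (by norm_num)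
    (show (125/98:ℝ) ≤ 1.06275^4 by norm_num) (by norm_num) (by norm_num)

lemma lg01 : -(2.3089615424:ℝ) ≤ Real.log 0.1 :=
  log_lb8 (by norm_num) (show (0:ℝ) < 1.25 by norm_num) (by norm_num)
    (show (1.25:ℝ) ≤ 1.05738^4 by norm_num) (by norm_num) (by norm_num)

lemma lg0104 : -(2.2677615424:ℝ) ≤ Real.log 0.104 :=
  log_lb8 (by norm_num) (show (0:ℝ) < 125/104 by norm_num) (by norm_num)
    (show (125/104:ℝ) ≤ 1.04708^4 by norm_num) (by norm_num) (by norm_num)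

lemma lg0107 : -(2.2380015424:ℝ) ≤ Real.log 0.107 :=
  log_lb8 (by norm_num) (show (0:ℝ) < 125/107 by norm_num) (by norm_num)
    (show (125/107:ℝ) ≤ 1.03964^4 by norm_num) (by norm_num) (by norm_num)

lemma lg01095 : -(2.2141215424:ℝ) ≤ Real.log 0.1095 :=
  log_lb8 (by norm_num) (show (0:ℝ) < 250/219 by norm_num) (by norm_num)
    (show (250/219:ℝ) ≤ 1.03367^4 by norm_num) (by norm_num) (by norm_num)

lemma lg0111 : -(2.2000415424:ℝ) ≤ Real.log 0.111 :=
  log_lb8 (by norm_num) (show (0:ℝ) < 125/111 by norm_num) (by norm_num)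
    (show (125/111:ℝ) ≤ 1.03015^4 by norm_num) (by norm_num) (by norm_num)

lemma lg0112 : -(2.1908015424:ℝ) ≤ Real.log 0.112 :=
  log_lb8 (by norm_num) (show (0:ℝ) < 125/112 by norm_num) (by norm_num)
    (show (125/112:ℝ) ≤ 1.02784^4 by norm_num) (by norm_num) (by norm_num)

lemma lg01128 : -(2.1835015424:ℝ) ≤ Real.log 0.1128 :=
  log_lb8 (by norm_num) (show (0:ℝ) < 625/564 by norm_num) (by norm_num)
    (show (625/564:ℝ) ≤ 1.026015^4 by norm_num) (by norm_num) (by norm_num)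

lemma lg0116ub : Real.log (250/29) ≤ 2.1548775424 := by
  have h : Real.log (250/29:ℝ) = Real.log 8 + Real.log (125/116) := by
    rw [← Real.log_mul (by norm_num) (by norm_num)]; norm_num
  have h2 : Real.log (125/116:ℝ) ≤ 4*(1.018859 - 1) :=
    log_ub_pow4 (by norm_num) (by norm_num) (by norm_num)
  rw [h]; have := log8_ub; linarith

lemma lg012lb : (2.1194415409:ℝ) ≤ Real.log (25/3) := by
  have h : Real.log (25/3:ℝ) = Real.log 8 + Real.log (25/24) := by
    rw [← Real.log_mul (by norm_num) (by norm_num)]; norm_num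
  have h2 : (1:ℝ) - 1/(25/24) ≤ Real.log (25/24) := one_sub_inv_le_log (by norm_num)
  rw [h]; have := log8_lb; norm_num at h2 ⊢; linarith

lemma lg013ub : Real.log 0.13 ≤ -1.5 := by
  have h : Real.log (0.13:ℝ) = -Real.log (100/13) := by
    rw [show (0.13:ℝ) = (100/13)⁻¹ by norm_num, Real.log_inv]
  have h1 : Real.log (100/13:ℝ) = Real.log 8 + Real.log (100/104) := by
    rw [← Real.log_mul (by norm_num) (by norm_num)]; norm_num
  have h2 : (1:ℝ) - 1/(100/104) ≤ Real.log (100/104) := one_sub_inv_le_log (by norm_num)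
  have := log8_lb
  rw [h, h1]; norm_num at h2 ⊢; linarith

lemma lg0125ub : Real.log 0.125 ≤ -2.0794415409 := by
  have h : Real.log (0.125:ℝ) = -Real.log 8 := by
    rw [show (0.125:ℝ) = (8:ℝ)⁻¹ by norm_num, Real.log_inv]
  rw [h]; have := log8_lb; linarith

lemma hasDerivAt_xlog {x : ℝ} (hx : x ≠ 0) :
    HasDerivAt (fun y : ℝ => y * Real.log y) (Real.log x + 1) x := by
  have h := (hasDerivAt_id x).mul (Real.hasDerivAt_log hx)
  exact h.congr_deriv (by simp only [id, one_mul, mul_inv_cancel₀ hx, add_comm])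

lemma hasDerivAt_hh {x : ℝ} (hx : x ≠ 0) :
    HasDerivAt hh (1/2 + (4*(x*Real.log x) + 2*x)) x := by
  have h1 : HasDerivAt (fun y : ℝ => y/2) (1/2) x := (hasDerivAt_id x).div_const 2
  have h2 : HasDerivAt (fun y : ℝ => 2*y^2*Real.log y)
      (4*x*Real.log x + 2*x^2*x⁻¹) x := by
    have h3 : HasDerivAt (fun y : ℝ => 2*y^2) (4*x) x := by
      have h := (hasDerivAt_pow 2 x).const_mul (2:ℝ)
      refine h.congr_deriv ?_
      norm_num
      ring
    exact h3.mul (Real.hasDerivAt_log hx)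
  have h4 := h1.add h2
  have hsimp : 1/2 + (4*x*Real.log x + 2*x^2*x⁻¹) = 1/2 + (4*(x*Real.log x) + 2*x) := by
    field_simp
  rw [hsimp] at h4
  exact h4

lemma deriv_hh {x : ℝ} (hx : x ≠ 0) :
    deriv hh x = 1/2 + (4*(x*Real.log x) + 2*x) := (hasDerivAt_hh hx).deriv

lemma ule {x y : ℝ} (hx : 0 ≤ x) (hxy : x ≤ y) (hy : y ≤ 0.2) :
    y * Real.log y ≤ x * Real.log x := by
  rcases eq_or_lt_of_le hx with h0 | h0
  · rw [← h0]
    simp only [zero_mul]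
    apply mul_nonpos_of_nonneg_of_nonpos (le_trans hx hxy)
    apply Real.log_nonpos (le_trans hx hxy); linarith
  · have hanti : AntitoneOn (fun y : ℝ => y * Real.log y) (Set.Ioc 0 0.2) := by
      apply antitoneOn_of_deriv_nonpos (convex_Ioc 0 0.2)
      · intro t ht
        exact ((hasDerivAt_xlog (ne_of_gt ht.1)).continuousAt).continuousWithinAt
      · intro t ht
        rw [interior_Ioc] at ht
        exact ((hasDerivAt_xlog (ne_of_gt ht.1)).differentiableAt).differentiableWithinAt
      · intro t ht
        rw [interior_Ioc] at ht
        rw [(hasDerivAt_xlog (ne_of_gt ht.1)).deriv]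
        have hlt : Real.log t ≤ Real.log 0.2 := Real.log_le_log ht.1 ht.2.le
        have h5 : Real.log (0.2:ℝ) ≤ -1 := by
          have he : Real.log (0.2:ℝ) = -Real.log 5 := by
            rw [show (0.2:ℝ) = (5:ℝ)⁻¹ by norm_num, Real.log_inv]
          rw [he]
          have h5' : (1:ℝ) ≤ Real.log 5 := by
            rw [Real.le_log_iff_exp_le (by norm_num : (0:ℝ) < 5)]
            have := Real.exp_one_lt_d9
            linarith
          linarith
        linarith
    exact hanti ⟨h0, le_trans hxy hy⟩ ⟨lt_of_lt_of_le h0 hxy, hy⟩ hxy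

lemma tail_pt {x m : ℝ} (hx : 0 ≤ x) (hxm : x ≤ m) (hm : m ≤ 0.2) :
    x*(1/2 + 2*(m*Real.log m)) ≤ hh x := by
  have h := ule hx hxm hm
  have h2 : x*(m*Real.log m) ≤ x*(x*Real.log x) := mul_le_mul_of_nonneg_left h hx
  unfold hh; nlinarith

lemma hh_mono : MonotoneOn hh (Set.Icc 0.009079 0.04) := by
  apply monotoneOn_of_deriv_nonneg (convex_Icc _ _)
  · intro t ht
    rw [Set.mem_Icc] at ht
    exact ((hasDerivAt_hh (by intro h; rw [h] at ht; norm_num at ht)).continuousAt).continuousWithinAt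
  · intro t ht
    rw [interior_Icc, Set.mem_Ioo] at ht
    exact ((hasDerivAt_hh (by intro h; rw [h] at ht; norm_num at ht)).differentiableAt).differentiableWithinAt
  · intro t ht
    rw [interior_Icc, Set.mem_Ioo] at ht
    obtain ⟨ht1, ht2⟩ := ht
    have htpos : (0:ℝ) < t := lt_trans (by norm_num) ht1
    rw [deriv_hh (ne_of_gt htpos)]
    rcases le_total t 0.02 with h | h
    · have hl2 : -(4.7018320:ℝ) ≤ Real.log t :=
        le_trans lg_t0 (Real.log_le_log (by norm_num) ht1.le)
      have h1 : t*(-(4.7018320:ℝ)) ≤ t*Real.log t := mul_le_mul_of_nonneg_left hl2 htpos.le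
      nlinarith
    · rcases le_total t 0.03 with h2 | h2
      · have hl2 : -(4.4394415424:ℝ) ≤ Real.log t :=
          le_trans lg002 (Real.log_le_log (by norm_num) h)
        have h1 : t*(-(4.4394415424:ℝ)) ≤ t*Real.log t := mul_le_mul_of_nonneg_left hl2 htpos.le
        nlinarith
      · rcases le_total t 0.035 with h3 | h3
        · have hl2 : -(3.5797887232:ℝ) ≤ Real.log t :=
            le_trans lg003 (Real.log_le_log (by norm_num) h2)
          have h1 : t*(-(3.5797887232:ℝ)) ≤ t*Real.log t := mul_le_mul_of_nonneg_left hl2 htpos.le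
          nlinarith
        · have hl2 : -(3.3969887232:ℝ) ≤ Real.log t :=
            le_trans lg0035 (Real.log_le_log (by norm_num) h3)
          have h1 : t*(-(3.3969887232:ℝ)) ≤ t*Real.log t := mul_le_mul_of_nonneg_left hl2 htpos.le
          nlinarith

lemma hh_anti : AntitoneOn hh (Set.Icc 0.095 0.1128) := by
  apply antitoneOn_of_deriv_nonpos (convex_Icc _ _)
  · intro t ht
    rw [Set.mem_Icc] at ht
    exact ((hasDerivAt_hh (by intro h; rw [h] at ht; norm_num at ht)).continuousAt).continuousWithinAt
  · intro t ht
    rw [interior_Icc, Set.mem_Ioo] at ht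
    exact ((hasDerivAt_hh (by intro h; rw [h] at ht; norm_num at ht)).differentiableAt).differentiableWithinAt
  · intro t ht
    rw [interior_Icc, Set.mem_Ioo] at ht
    obtain ⟨ht1, ht2⟩ := ht
    have htpos : (0:ℝ) < t := lt_trans (by norm_num) ht1
    rw [deriv_hh (ne_of_gt htpos)]
    have hl : Real.log t ≤ -2.0794415409 := by
      have : Real.log t ≤ Real.log 0.125 := Real.log_le_log htpos (by linarith)
      linarith [lg0125ub]
    have h1 : t*Real.log t ≤ t*(-2.0794415409:ℝ) := mul_le_mul_of_nonneg_left hl htpos.le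
    nlinarith

lemma hh_concave : ConcaveOn ℝ (Set.Icc 0.09 0.13) hh := by
  have hstrict : StrictConcaveOn ℝ (Set.Icc 0.09 0.13) hh := by
    apply strictConcaveOn_of_deriv2_neg (convex_Icc _ _)
    · intro t ht
      rw [Set.mem_Icc] at ht
      exact ((hasDerivAt_hh (by intro h; rw [h] at ht; norm_num at ht)).continuousAt).continuousWithinAt
    · intro t ht
      rw [interior_Icc, Set.mem_Ioo] at ht
      obtain ⟨ht1, ht2⟩ := ht
      have htpos : (0:ℝ) < t := lt_trans (by norm_num) ht1
      have hev : deriv hh =ᶠ[nhds t] (fun y => 1/2 + (4*(y*Real.log y) + 2*y)) := by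
        filter_upwards [Ioi_mem_nhds htpos] with y hy
        exact deriv_hh (ne_of_gt hy)
      have h2 : deriv^[2] hh t = deriv (fun y => 1/2 + (4*(y*Real.log y) + 2*y)) t := by
        show deriv (deriv hh) t = _
        exact Filter.EventuallyEq.deriv_eq hev
      have h3 : HasDerivAt (fun y : ℝ => 1/2 + (4*(y*Real.log y) + 2*y))
          (4*(Real.log t + 1) + 2) t := by
        have ha := ((hasDerivAt_xlog (ne_of_gt htpos)).const_mul (4:ℝ)).add
          ((hasDerivAt_id t).const_mul (2:ℝ))
        have hb := ha.const_add (1/2 : ℝ)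
        refine hb.congr_deriv ?_
        ring
      rw [h2, h3.deriv]
      have hl : Real.log t < Real.log 0.13 := Real.log_lt_log htpos ht2
      linarith [lg013ub]
  exact hstrict.concaveOn

lemma chord {r s v A' : ℝ} (hr : 0 ≤ r) (hs : 0.095 ≤ s) (hs2 : s ≤ 0.1128)
    (hv1 : s ≤ v) (hv2 : v ≤ A')
    (hA'2 : A' ≤ 0.13) (hA : (0.116:ℝ) ≤ A') (hends : r*(0.116 - s) ≤ hh s)
    (hzero : hh A' = 0) : r*(0.116 - v) ≤ hh v := by
  have hsA : s < A' := by linarith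
  set d : ℝ := A' - s with hd
  have hdpos : 0 < d := by rw [hd]; linarith
  set lam : ℝ := (A' - v)/d with hlam
  set mu : ℝ := (v - s)/d with hmu
  have hlam0 : 0 ≤ lam := by apply div_nonneg (by linarith) hdpos.le
  have hmu0 : 0 ≤ mu := by apply div_nonneg (by linarith) hdpos.le
  have hsum1 : lam + mu = 1 := by
    rw [hlam, hmu, ← add_div, div_eq_one_iff_eq hdpos.ne', hd]; ring
  have hcomb : lam * s + mu * A' = v := by
    rw [hlam, hmu, div_mul_eq_mul_div, div_mul_eq_mul_div, ← add_div, div_eq_iff hdpos.ne', hd]; ring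
  have hmem1 : s ∈ Set.Icc (0.09:ℝ) 0.13 := ⟨by linarith, by linarith⟩
  have hmem2 : A' ∈ Set.Icc (0.09:ℝ) 0.13 := ⟨by linarith, hA'2⟩
  have hcon := hh_concave.2 hmem1 hmem2 hlam0 hmu0 hsum1
  rw [smul_eq_mul, smul_eq_mul, smul_eq_mul, smul_eq_mul, hcomb, hzero] at hcon
  have hkey : r*(0.116 - v) ≤ lam * (r*(0.116 - s)) := by
    have hexp : lam * (0.116 - s) - (0.116 - v) = mu * (A' - 0.116) := by
      rw [hlam, hmu]
      field_simp [hdpos.ne']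
      rw [hd]; ring
    nlinarith [mul_nonneg hmu0 (by linarith : (0:ℝ) ≤ A' - 0.116),
      mul_le_mul_of_nonneg_left hends hlam0]
  calc r*(0.116 - v) ≤ lam * (r*(0.116 - s)) := hkey
    _ ≤ lam * hh s := mul_le_mul_of_nonneg_left hends hlam0
    _ ≤ hh v := by linarith
/-- the optimization bound Σ_j z(α_j) ≤ 0.4962357. Indices are
`j : Fin n` corresponding to `j.val + 1 ∈ {1,…,n}`, so `j ≥ 9` means `8 ≤ j.val`. -/
theorem stmt14 (n : ℕ) (a : Fin n → ℝ)
    (hmono : ∀ i j : Fin n, i ≤ j → a j ≤ a i)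
    (hnonneg : ∀ j, 0 ≤ a j)
    (hsum : ∑ j, a j = 1)
    (htail : 0.009079 ≤ ∑ j ∈ Finset.univ.filter (fun j : Fin n => 8 ≤ j.val), a j)
    (α' : ℝ) (hα'mem : α' ∈ Set.Ioo (0 : ℝ) (1 / 2))
    (hα'eq : 2 * α' ^ 2 * Real.log (1 / α') = α' / 2)
    (hα'uniq : ∀ β ∈ Set.Ioo (0 : ℝ) (1 / 2),
      2 * β ^ 2 * Real.log (1 / β) = β / 2 → β = α')
    (z : ℝ → ℝ)
    (hz : ∀ α, z α = if α < α' then 2 * α ^ 2 * Real.log (1 / α) else α / 2) :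
    ∑ j, z (a j) ≤ 0.4962357 := by
  have hα'pos : 0 < α' := hα'mem.1
  -- α' ∈ (0.116, 0.12)
  have hα'rng : 0.116 < α' ∧ α' < 0.12 := by
    set f : ℝ → ℝ := fun β => 2*β^2*Real.log (1/β) - β/2 with hf
    have hne : ∀ x ∈ Set.Icc (0.116:ℝ) 0.12, x ≠ 0 := by
      intro x hx; rw [Set.mem_Icc] at hx; intro h; rw [h] at hx; norm_num at hx
    have hcont : ContinuousOn f (Set.Icc 0.116 0.12) := by
      apply ContinuousOn.sub
      · apply ContinuousOn.mul
        · exact (continuous_const.mul (continuous_pow 2)).continuousOn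
        · apply ContinuousOn.log
          · exact continuousOn_const.div continuousOn_id hne
          · intro x hx
            exact one_div_ne_zero (hne x hx)
      · exact (continuous_id.div_const 2).continuousOn
    have hv1 : f 0.116 < 0 := by
      have h1 : (1:ℝ)/(0.116:ℝ) = 250/29 := by norm_num
      simp only [hf, h1]
      nlinarith [lg0116ub]
    have hv2 : 0 < f 0.12 := by
      have h1 : (1:ℝ)/(0.12:ℝ) = 25/3 := by norm_num
      simp only [hf, h1]
      nlinarith [lg012lb]
    have hivt := intermediate_value_Ioo (by norm_num : (0.116:ℝ) ≤ 0.12) hcont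
    have h0mem : (0:ℝ) ∈ Set.Ioo (f 0.116) (f 0.12) := ⟨hv1, hv2⟩
    obtain ⟨β, hβmem, hβval⟩ := hivt h0mem
    have hβeq : 2*β^2*Real.log (1/β) = β/2 := by
      have := hβval; simp only [hf] at this; linarith
    have hβα' : β = α' := hα'uniq β
      ⟨by linarith [hβmem.1], by linarith [hβmem.2]⟩ hβeq
    exact ⟨by rw [← hβα']; exact hβmem.1, by rw [← hβα']; exact hβmem.2⟩
  obtain ⟨hα'lb, hα'ub⟩ := hα'rng
  -- α' * log α' = -1/4
  have heq2 : 2*α'^2*(-Real.log α') = α'/2 := by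
    rw [one_div, Real.log_inv] at hα'eq; exact hα'eq
  have hu4 : α' * Real.log α' = -(1/4) := by
    have h2 : α' * (α' * Real.log α' + 1/4) = 0 := by linear_combination (-(1:ℝ)/2) * heq2
    rcases mul_eq_zero.1 h2 with h | h
    · exact absurd h hα'pos.ne'
    · linarith
  have hhα'0 : hh α' = 0 := by
    unfold hh; linear_combination (2*α') * hu4
  -- the deficit function
  set δ : Fin n → ℝ := fun j => a j / 2 - z (a j) with hδdef
  have hδlt : ∀ j : Fin n, a j < α' → δ j = hh (a j) := by
    intro j hj
    simp only [hδdef, hz, if_pos hj, hh]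
    rw [one_div, Real.log_inv]
    ring
  have hδge : ∀ j : Fin n, ¬ a j < α' → δ j = 0 := by
    intro j hj
    simp only [hδdef, hz, if_neg hj]
    ring
  have hδ0 : ∀ j, 0 ≤ δ j := by
    intro j
    by_cases hc : a j < α'
    · rw [hδlt j hc]
      have h := tail_pt (hnonneg j) hc.le (by linarith : α' ≤ 0.2)
      rw [hu4] at h
      nlinarith
    · rw [hδge j hc]
  -- reduction to the deficit bound
  have hzsum : ∑ j, z (a j) = 1/2 - ∑ j, δ j := by
    have h1 : ∑ j, δ j = (∑ j, a j)/2 - ∑ j, z (a j) := by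
      rw [Finset.sum_div, ← Finset.sum_sub_distrib]
    rw [hsum] at h1; linarith
  rw [hzsum]
  suffices hmain : (0.0037643:ℝ) ≤ ∑ j, δ j by linarith
  -- set-up: tail and head
  set T : ℝ := ∑ j ∈ Finset.univ.filter (fun j : Fin n => 8 ≤ j.val), a j with hT
  have ht0T : (0.009079:ℝ) ≤ T := htail
  have hn : 9 ≤ n := by
    by_contra hc
    push_neg at hc
    have hemp : Finset.univ.filter (fun j : Fin n => 8 ≤ j.val) = ∅ := by
      apply Finset.filter_false_of_mem
      intro j _
      have := j.isLt
      omega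
    rw [hT, hemp, Finset.sum_empty] at ht0T
    norm_num at ht0T
  set i8 : Fin n := ⟨8, by omega⟩ with hi8
  set s : ℝ := a i8 with hs
  have hs0 : 0 ≤ s := hnonneg i8
  have hi8mem : i8 ∈ Finset.univ.filter (fun j : Fin n => 8 ≤ j.val) :=
    Finset.mem_filter.mpr ⟨Finset.mem_univ _, by simp [hi8]⟩
  have hsT : s ≤ T := Finset.single_le_sum (fun i _ => hnonneg i) hi8mem
  have htails : ∀ j ∈ Finset.univ.filter (fun j : Fin n => 8 ≤ j.val), a j ≤ s := by
    intro j hj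
    have h8j : 8 ≤ j.val := (Finset.mem_filter.mp hj).2
    exact hmono i8 j (by rw [Fin.le_def]; simpa [hi8] using h8j)
  have htailT : ∀ j ∈ Finset.univ.filter (fun j : Fin n => 8 ≤ j.val), a j ≤ T :=
    fun j hj => Finset.single_le_sum (fun i _ => hnonneg i) hj
  have hheads : ∀ j ∈ Finset.univ.filter (fun j : Fin n => ¬ 8 ≤ j.val), s ≤ a j := by
    intro j hj
    have h8j : ¬ 8 ≤ j.val := (Finset.mem_filter.mp hj).2
    exact hmono j i8 (by rw [Fin.le_def]; simp [hi8]; omega)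
  have hsplit := Finset.sum_filter_add_sum_filter_not Finset.univ
    (fun j : Fin n => 8 ≤ j.val) δ
  have hsplita := Finset.sum_filter_add_sum_filter_not Finset.univ
    (fun j : Fin n => 8 ≤ j.val) a
  have hheadsum : ∑ j ∈ Finset.univ.filter (fun j : Fin n => ¬ 8 ≤ j.val), a j = 1 - T := by
    rw [hT]; rw [hsum] at hsplita; linarith
  have hcard : (Finset.univ.filter (fun j : Fin n => ¬ 8 ≤ j.val)).card = 8 := by
    have hbij : (Finset.univ.filter (fun j : Fin n => ¬ 8 ≤ j.val)).card
        = (Finset.univ : Finset (Fin 8)).card := by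
      refine Finset.card_bij' (fun (j : Fin n) (hj : j ∈ _) =>
          (⟨j.val, by have := (Finset.mem_filter.mp hj).2; omega⟩ : Fin 8))
        (fun (m : Fin 8) (_ : m ∈ _) => (⟨m.val, by omega⟩ : Fin n)) ?_ ?_ ?_ ?_
      · intro j hj; exact Finset.mem_univ _
      · intro m hm
        apply Finset.mem_filter.mpr
        refine ⟨Finset.mem_univ _, ?_⟩
        show ¬ 8 ≤ (m : ℕ)
        have := m.isLt
        omega
      · intro j hj; apply Fin.ext; simp
      · intro m hm; apply Fin.ext; simp
    rw [hbij]; simp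
  have h8s : 8*s ≤ 1 - T := by
    have h1 : ∑ _j ∈ Finset.univ.filter (fun j : Fin n => ¬ 8 ≤ j.val), s
        ≤ ∑ j ∈ Finset.univ.filter (fun j : Fin n => ¬ 8 ≤ j.val), a j :=
      Finset.sum_le_sum hheads
    rw [Finset.sum_const, hcard, hheadsum, nsmul_eq_mul] at h1
    push_cast at h1
    linarith
  have hheadδ0 : 0 ≤ ∑ j ∈ Finset.univ.filter (fun j : Fin n => ¬ 8 ≤ j.val), δ j :=
    Finset.sum_nonneg (fun j _ => hδ0 j)
  have hT1 : T ≤ 1 := by nlinarith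
  clear_value T s δ
  -- main case split on T
  rcases le_total T 0.098 with hTc | hTc
  · -- Case 1 : small tail sum, use h(T) ≥ D
    have htailδ : ∀ j ∈ Finset.univ.filter (fun j : Fin n => 8 ≤ j.val),
        a j * (1/2 + 2*(T*Real.log T)) ≤ δ j := by
      intro j hj
      have h1 : a j < α' := by linarith [htailT j hj]
      rw [hδlt j h1]
      exact tail_pt (hnonneg j) (htailT j hj) (by linarith)
    have hsum1 : T * (1/2 + 2*(T*Real.log T))
        ≤ ∑ j ∈ Finset.univ.filter (fun j : Fin n => 8 ≤ j.val), δ j := by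
      calc T * (1/2 + 2*(T*Real.log T))
          = ∑ j ∈ Finset.univ.filter (fun j : Fin n => 8 ≤ j.val),
              a j * (1/2 + 2*(T*Real.log T)) := by rw [hT, ← Finset.sum_mul]
        _ ≤ _ := Finset.sum_le_sum htailδ
    have hnum : (0.0037643:ℝ) ≤ T * (1/2 + 2*(T*Real.log T)) := by
      rcases le_total T 0.04 with h | h
      · have hhh : T*(1/2 + 2*(T*Real.log T)) = hh T := by unfold hh; ring
        rw [hhh]
        have hmm : hh 0.009079 ≤ hh T :=
          hh_mono (Set.mem_Icc.mpr ⟨le_refl _, by norm_num⟩)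
            (Set.mem_Icc.mpr ⟨ht0T, h⟩) ht0T
        have hnum2 : (0.0037643:ℝ) ≤ hh 0.009079 := by
          unfold hh; nlinarith [lg_t0]
        linarith
      · have hTpos : (0:ℝ) ≤ T := by linarith
        rcases le_total T 0.065 with h2 | h2
        · have hu := ule hTpos h2 (by norm_num)
          have hc : (0.1370605:ℝ) ≤ 1/2 + 2*(T*Real.log T) := by
            nlinarith [lg0065]
          nlinarith [mul_le_mul h hc (by norm_num) hTpos]
        · rcases le_total T 0.085 with h3 | h3
          · have hu := ule hTpos h3 (by norm_num)
            have hc : (0.0775973:ℝ) ≤ 1/2 + 2*(T*Real.log T) := by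
              nlinarith [lg0085]
            nlinarith [mul_le_mul h2 hc (by norm_num) hTpos]
          · rcases le_total T 0.095 with h4 | h4
            · have hu := ule hTpos h4 (by norm_num)
              have hc : (0.0509233:ℝ) ≤ 1/2 + 2*(T*Real.log T) := by
                nlinarith [lg0095]
              nlinarith [mul_le_mul h3 hc (by norm_num) hTpos]
            · have hu := ule hTpos hTc (by norm_num)
              have hc : (0.0432334:ℝ) ≤ 1/2 + 2*(T*Real.log T) := by
                nlinarith [lg0098]
              nlinarith [mul_le_mul h4 hc (by norm_num) hTpos]
    linarith
  · -- Case 2 : T ≥ 0.098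
    have hs1128 : s ≤ 0.1128 := by linarith
    -- generic strip lemma
    have key : ∀ s₁ s₂ r w : ℝ, 0 ≤ r → 0 ≤ w → 0.095 ≤ s₁ → s₁ ≤ s → s ≤ s₂ →
        s₂ ≤ 0.1128 → r*(0.116 - s₁) ≤ hh s₂ → w ≤ 1/2 + 2*(s₂*Real.log s₂) →
        r*(8*0.116 - (1 - T)) + w*T ≤ ∑ j, δ j := by
      intro s₁ s₂ r w hr hw hs₁ hss₁ hss₂ hs₂ hends hwc
      have htailδ : ∀ j ∈ Finset.univ.filter (fun j : Fin n => 8 ≤ j.val),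
          w * a j ≤ δ j := by
        intro j hj
        have haj : a j ≤ s := htails j hj
        have h1 : a j < α' := by linarith
        rw [hδlt j h1]
        have h2 := tail_pt (hnonneg j) (le_trans haj hss₂) (by linarith : s₂ ≤ 0.2)
        calc w * a j = a j * w := mul_comm _ _
          _ ≤ a j * (1/2 + 2*(s₂*Real.log s₂)) := mul_le_mul_of_nonneg_left hwc (hnonneg j)
          _ ≤ hh (a j) := h2
      have htailsum : w * T ≤ ∑ j ∈ Finset.univ.filter (fun j : Fin n => 8 ≤ j.val), δ j := by
        calc w*T = ∑ j ∈ Finset.univ.filter (fun j : Fin n => 8 ≤ j.val), w * a j := by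
              rw [hT, Finset.mul_sum]
          _ ≤ _ := Finset.sum_le_sum htailδ
      have hends' : r*(0.116 - s) ≤ hh s := by
        have h1 : r*(0.116 - s) ≤ r*(0.116 - s₁) := by nlinarith
        have h2 : hh s₂ ≤ hh s :=
          hh_anti (Set.mem_Icc.mpr ⟨by linarith, by linarith⟩)
            (Set.mem_Icc.mpr ⟨by linarith, hs₂⟩) hss₂
        linarith
      have hheadδ : ∀ j ∈ Finset.univ.filter (fun j : Fin n => ¬ 8 ≤ j.val),
          r*(0.116 - a j) ≤ δ j := by
        intro j hj
        by_cases hc : a j < α'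
        · rw [hδlt j hc]
          exact chord hr (by linarith) (by linarith) (hheads j hj) hc.le
            (by linarith) (by linarith) hends' hhα'0
        · rw [hδge j hc]
          push_neg at hc
          have h3 : (0.116:ℝ) ≤ a j := by linarith
          nlinarith
      have hheadsum' : r*(8*0.116 - (1 - T))
          ≤ ∑ j ∈ Finset.univ.filter (fun j : Fin n => ¬ 8 ≤ j.val), δ j := by
        have h1 : ∑ j ∈ Finset.univ.filter (fun j : Fin n => ¬ 8 ≤ j.val), (r*(0.116 - a j))
            ≤ ∑ j ∈ Finset.univ.filter (fun j : Fin n => ¬ 8 ≤ j.val), δ j :=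
          Finset.sum_le_sum hheadδ
        have h2 : ∑ j ∈ Finset.univ.filter (fun j : Fin n => ¬ 8 ≤ j.val), (r*(0.116 - a j))
            = r*(8*0.116 - (1 - T)) := by
          simp_rw [mul_sub]
          rw [Finset.sum_sub_distrib, Finset.sum_const, hcard, ← Finset.mul_sum, hheadsum]
          push_cast
          ring
        linarith
      linarith
    -- strip case analysis on s
    rcases le_total s 0.095 with hsc | hsc
    · -- s ≤ 0.095 : tail alone suffices
      have htailδ : ∀ j ∈ Finset.univ.filter (fun j : Fin n => 8 ≤ j.val),
          (0.0509233:ℝ) * a j ≤ δ j := by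
        intro j hj
        have haj : a j ≤ s := htails j hj
        have h1 : a j < α' := by linarith
        rw [hδlt j h1]
        have h2 := tail_pt (hnonneg j) (le_trans haj hsc) (by norm_num : (0.095:ℝ) ≤ 0.2)
        have hc : (0.0509233:ℝ) ≤ 1/2 + 2*((0.095:ℝ)*Real.log 0.095) := by
          nlinarith [lg0095]
        calc (0.0509233:ℝ) * a j = a j * 0.0509233 := mul_comm _ _
          _ ≤ a j * (1/2 + 2*((0.095:ℝ)*Real.log 0.095)) :=
              mul_le_mul_of_nonneg_left hc (hnonneg j)
          _ ≤ hh (a j) := h2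
      have htailsum : (0.0509233:ℝ) * T
          ≤ ∑ j ∈ Finset.univ.filter (fun j : Fin n => 8 ≤ j.val), δ j := by
        calc (0.0509233:ℝ)*T
            = ∑ j ∈ Finset.univ.filter (fun j : Fin n => 8 ≤ j.val), 0.0509233 * a j := by
              rw [hT, Finset.mul_sum]
          _ ≤ _ := Finset.sum_le_sum htailδ
      nlinarith
    · -- 0.095 ≤ s ≤ 0.1128 : strips
      have hTs₁ : s ≤ T := hsT
      rcases le_total s 0.1 with hc1 | hc1
      · have h := key 0.095 0.1 0.1819 0.0382076 (by norm_num) (by norm_num) (by norm_num)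
          hsc hc1 (by norm_num) (by unfold hh; nlinarith [lg01]) (by nlinarith [lg01])
        nlinarith
      · rcases le_total s 0.104 with hc2 | hc2
        · have h := key 0.1 0.104 0.1839 0.0283055 (by norm_num) (by norm_num) (by norm_num)
            hc1 hc2 (by norm_num) (by unfold hh; nlinarith [lg0104]) (by nlinarith [lg0104])
          nlinarith
        · rcases le_total s 0.107 with hc3 | hc3
          · have h := key 0.104 0.107 0.1878 0.0210676 (by norm_num) (by norm_num)
              (by norm_num) hc2 hc3 (by norm_num)
              (by unfold hh; nlinarith [lg0107]) (by nlinarith [lg0107])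
            nlinarith
          · rcases le_total s 0.1095 with hc4 | hc4
            · have h := key 0.107 0.1095 0.1838 0.01510738 (by norm_num) (by norm_num)
                (by norm_num) hc3 hc4 (by norm_num)
                (by unfold hh; nlinarith [lg01095]) (by nlinarith [lg01095])
              nlinarith
            · rcases le_total s 0.111 with hc5 | hc5
              · have h := key 0.1095 0.111 0.1979 0.0115907 (by norm_num) (by norm_num)
                  (by norm_num) hc4 hc5 (by norm_num)
                  (by unfold hh; nlinarith [lg0111]) (by nlinarith [lg0111])
                nlinarith
              · rcases le_total s 0.112 with hc6 | hc6
                · have h := key 0.111 0.112 0.2074 0.00926045 (by norm_num) (by norm_num)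
                    (by norm_num) hc5 hc6 (by norm_num)
                    (by unfold hh; nlinarith [lg0112]) (by nlinarith [lg0112])
                  nlinarith
                · have h := key 0.112 0.1128 0.2087 0.00740205 (by norm_num) (by norm_num)
                    (by norm_num) hc6 hs1128 (by norm_num)
                    (by unfold hh; nlinarith [lg01128]) (by nlinarith [lg01128])
                  nlinarith
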